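/- Let F₂ = FreeGroup (Fin 2) be the free group on two generators a, b, let ψ : F₂ ≃* F₂ be the automorphism determined by ψ(a) = b⁻¹, ψ(b) = a·b, and let φ : Multiplicative ℤ →* MulAut F₂ be the homomorphism sending the generator of ℤ to ψ. Then the semidirect product F₂ ⋊[φ] Multiplicative ℤ is isomorphic, as a group, to the presented group ⟨x, y | x·y·x = y·x·y⟩ (the trefoil knot group). -/

import Mathlib

/-- The relation `x·y·x·(y·x·y)⁻¹` presenting the trefoil knot group `⟨x, y | xyx = yxy⟩`. -/
def trefoilRels : Set (FreeGroup (Fin 2)) :=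
  {FreeGroup.of 0 * FreeGroup.of 1 * FreeGroup.of 0 *
    (FreeGroup.of 1 * FreeGroup.of 0 * FreeGroup.of 1)⁻¹}

lemma trefoil_rel :
    (PresentedGroup.of 0 : PresentedGroup trefoilRels) * PresentedGroup.of 1 *
      PresentedGroup.of 0 =
    PresentedGroup.of 1 * PresentedGroup.of 0 * PresentedGroup.of 1 := by
  have h : (PresentedGroup.mk trefoilRels)
      (FreeGroup.of 0 * FreeGroup.of 1 * FreeGroup.of 0 *
        (FreeGroup.of 1 * FreeGroup.of 0 * FreeGroup.of 1)⁻¹) = 1 := by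
    have hmem : (FreeGroup.of 0 * FreeGroup.of 1 * FreeGroup.of 0 *
        (FreeGroup.of 1 * FreeGroup.of 0 * FreeGroup.of 1)⁻¹ : FreeGroup (Fin 2)) ∈
        Subgroup.normalClosure trefoilRels :=
      Subgroup.subset_normalClosure rfl
    exact (QuotientGroup.eq_one_iff _).2 hmem
  simp only [map_mul, map_inv] at h
  have := mul_eq_one_iff_eq_inv.mp h
  rw [inv_inv] at this
  exact this

/-- The mapping-torus group of the trefoil monodromy: the semidirect product
`F₂ ⋊_ψ ℤ`, where `ψ(a) = b⁻¹`, `ψ(b) = ab`, is isomorphic to the trefoil knot group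
`⟨x, y | xyx = yxy⟩`. -/
theorem semidirect_monodromy_iso_trefoil_group (ψ : MulAut (FreeGroup (Fin 2)))
    (ha : ψ (FreeGroup.of 0) = (FreeGroup.of 1)⁻¹)
    (hb : ψ (FreeGroup.of 1) = FreeGroup.of 0 * FreeGroup.of 1)
    (φ : Multiplicative ℤ →* MulAut (FreeGroup (Fin 2)))
    (hφ : φ (Multiplicative.ofAdd 1) = ψ) :
    Nonempty ((FreeGroup (Fin 2) ⋊[φ] Multiplicative ℤ) ≃* PresentedGroup trefoilRels) := by
  set P := PresentedGroup trefoilRels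
  set x : P := PresentedGroup.of 0 with hx
  set y : P := PresentedGroup.of 1 with hy
  have rel : x * y * x = y * x * y := trefoil_rel
  -- the map F₂ → P,  a ↦ y⁻¹x,  b ↦ yx⁻¹
  set f₁ : FreeGroup (Fin 2) →* P :=
    FreeGroup.lift (fun i => if i = 0 then y⁻¹ * x else y * x⁻¹) with hf₁
  have f₁a : f₁ (FreeGroup.of 0) = y⁻¹ * x := by simp [hf₁]
  have f₁b : f₁ (FreeGroup.of 1) = y * x⁻¹ := by simp [hf₁]
  -- the map ℤ → P, 1 ↦ x
  set f₂ : Multiplicative ℤ →* P := zpowersHom P x with hf₂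
  have f₂1 : f₂ (Multiplicative.ofAdd 1) = x := by simp [hf₂]
  have h3 : y⁻¹ * x * y = x * y * x⁻¹ := by
    have h2 : y⁻¹ * (x * y * x) * x⁻¹ = y⁻¹ * (y * x * y) * x⁻¹ := by rw [rel]
    calc y⁻¹ * x * y = y⁻¹ * (x * y * x) * x⁻¹ := by group
      _ = y⁻¹ * (y * x * y) * x⁻¹ := h2
      _ = x * y * x⁻¹ := by group
  -- compatibility at the generator
  have key1 : f₁.comp ψ.toMonoidHom = (MulAut.conj x).toMonoidHom.comp f₁ := by
    apply FreeGroup.ext_hom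
    rw [Fin.forall_fin_two]
    constructor
    · simp only [MonoidHom.comp_apply, MulEquiv.coe_toMonoidHom, ha, MulAut.conj_apply,
        map_inv, f₁a, f₁b]
      group
    · show f₁ (ψ (FreeGroup.of 1)) = MulAut.conj x (f₁ (FreeGroup.of 1))
      rw [hb, map_mul, f₁a, f₁b, MulAut.conj_apply]
      calc y⁻¹ * x * (y * x⁻¹) = (y⁻¹ * x * y) * x⁻¹ := by simp only [mul_assoc]
        _ = x * y * x⁻¹ * x⁻¹ := by rw [h3]
        _ = x * (y * x⁻¹) * x⁻¹ := by simp only [mul_assoc]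
  have key : ∀ g : Multiplicative ℤ,
      f₁.comp (φ g).toMonoidHom = (MulAut.conj (f₂ g)).toMonoidHom.comp f₁ := by
    have step : ∀ g : Multiplicative ℤ,
        f₁.comp (φ g).toMonoidHom = (MulAut.conj (f₂ g)).toMonoidHom.comp f₁ →
        ∀ h : Multiplicative ℤ,
        f₁.comp (φ h).toMonoidHom = (MulAut.conj (f₂ h)).toMonoidHom.comp f₁ →
        f₁.comp (φ (g * h)).toMonoidHom = (MulAut.conj (f₂ (g * h))).toMonoidHom.comp f₁ := by
      intro g hg h hh
      ext w
      have hgw := fun u => DFunLike.congr_fun hg u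
      have hhw := fun u => DFunLike.congr_fun hh u
      simp only [MonoidHom.comp_apply, MulEquiv.coe_toMonoidHom, MulAut.conj_apply] at hgw hhw ⊢
      rw [map_mul φ g h, MulAut.mul_apply, hgw, hhw, map_mul f₂ g h]
      group
    have inv_step : ∀ g : Multiplicative ℤ,
        f₁.comp (φ g).toMonoidHom = (MulAut.conj (f₂ g)).toMonoidHom.comp f₁ →
        f₁.comp (φ g⁻¹).toMonoidHom = (MulAut.conj (f₂ g⁻¹)).toMonoidHom.comp f₁ := by
      intro g hg
      ext w
      have hgw := DFunLike.congr_fun hg (((φ g)⁻¹ : MulAut _) (FreeGroup.of w))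
      simp only [MonoidHom.comp_apply, MulEquiv.coe_toMonoidHom, MulAut.conj_apply] at hgw
      rw [MulAut.apply_inv_self] at hgw
      show f₁ ((φ g⁻¹) (FreeGroup.of w)) = MulAut.conj (f₂ g⁻¹) (f₁ (FreeGroup.of w))
      rw [map_inv φ, map_inv f₂, MulAut.conj_apply, inv_inv, hgw]
      group
    have base : f₁.comp (φ (Multiplicative.ofAdd 1)).toMonoidHom =
        (MulAut.conj (f₂ (Multiplicative.ofAdd 1))).toMonoidHom.comp f₁ := by
      rw [hφ, f₂1]; exact key1
    intro g
    have hg : g = (Multiplicative.ofAdd (1 : ℤ)) ^ (Multiplicative.toAdd g) := by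
      rw [← ofAdd_zsmul, smul_eq_mul, mul_one]
      simp
    rw [hg]
    generalize (Multiplicative.toAdd g) = n
    induction n using Int.induction_on with
    | zero => simp only [zpow_zero]
              ext w; simp
    | succ k ih =>
        rw [zpow_add, zpow_one]
        exact step _ ih _ base
    | pred k ih =>
        rw [zpow_sub, zpow_one]
        exact step _ ih _ (inv_step _ base)
  -- forward map
  set F : (FreeGroup (Fin 2) ⋊[φ] Multiplicative ℤ) →* P := SemidirectProduct.lift f₁ f₂ key
    with hF
  -- backward map
  set T : FreeGroup (Fin 2) ⋊[φ] Multiplicative ℤ :=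
    SemidirectProduct.inr (Multiplicative.ofAdd 1) with hT
  set B : FreeGroup (Fin 2) ⋊[φ] Multiplicative ℤ :=
    SemidirectProduct.inl (FreeGroup.of 1) with hB
  have hTconj : ∀ w : FreeGroup (Fin 2),
      T * SemidirectProduct.inl w = SemidirectProduct.inl (ψ w) * T := by
    intro w
    have := SemidirectProduct.inl_aut (φ := φ) (Multiplicative.ofAdd 1) w
    rw [hφ] at this
    rw [hT, this, map_inv]
    group
  have relSDP : T * (B * T) * T = (B * T) * T * (B * T) := by
    have h1 : T * B = SemidirectProduct.inl (ψ (FreeGroup.of 1)) * T := hTconj _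
    have h2 : T * SemidirectProduct.inl (ψ (FreeGroup.of 1)) =
        SemidirectProduct.inl (ψ (ψ (FreeGroup.of 1))) * T := hTconj _
    calc T * (B * T) * T = (T * B) * T * T := by group
      _ = SemidirectProduct.inl (ψ (FreeGroup.of 1)) * T * T * T := by rw [h1]
      _ = SemidirectProduct.inl (FreeGroup.of 0 * FreeGroup.of 1) * (T * T * T) := by
          rw [hb]; group
      _ = B * (SemidirectProduct.inl (ψ (ψ (FreeGroup.of 1))) * (T * T * T)) := by
          have harg : ψ (ψ (FreeGroup.of 1)) =
              (FreeGroup.of 1)⁻¹ * (FreeGroup.of 0 * FreeGroup.of 1) := by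
            rw [hb, map_mul ψ, ha, hb]
          have hcomb : (SemidirectProduct.inl (FreeGroup.of 1) :
                FreeGroup (Fin 2) ⋊[φ] Multiplicative ℤ) *
              SemidirectProduct.inl ((FreeGroup.of 1)⁻¹ *
                (FreeGroup.of 0 * FreeGroup.of 1)) =
              SemidirectProduct.inl (FreeGroup.of 0 * FreeGroup.of 1) := by
            rw [← map_mul, mul_inv_cancel_left]
          rw [harg, hB]
          conv_rhs => rw [← mul_assoc, hcomb]
      _ = B * (T * SemidirectProduct.inl (ψ (FreeGroup.of 1)) * (T * T)) := by
          rw [h2]; group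
      _ = B * (T * (T * B) * T) := by rw [h1]; group
      _ = (B * T) * T * (B * T) := by group
  have hrel : ∀ r ∈ trefoilRels,
      FreeGroup.lift (fun i : Fin 2 => if i = 0 then T else B * T) r = 1 := by
    intro r hr
    rw [Set.mem_singleton_iff.mp hr]
    have hlift : FreeGroup.lift (fun i : Fin 2 => if i = 0 then T else B * T)
        (FreeGroup.of 0 * FreeGroup.of 1 * FreeGroup.of 0 *
          (FreeGroup.of 1 * FreeGroup.of 0 * FreeGroup.of 1)⁻¹) =
        T * (B * T) * T * ((B * T) * T * (B * T))⁻¹ := by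
      simp
    rw [hlift, relSDP, mul_inv_cancel]
  set G : P →* (FreeGroup (Fin 2) ⋊[φ] Multiplicative ℤ) := PresentedGroup.toGroup hrel with hG
  have Gx : G x = T := PresentedGroup.toGroup.of hrel
  have Gy : G y = B * T := by
    have : G y = if (1 : Fin 2) = 0 then T else B * T := PresentedGroup.toGroup.of hrel
    simpa using this
  -- G ∘ F = id
  have hGF : G.comp F = MonoidHom.id _ := by
    apply SemidirectProduct.hom_ext
    · apply FreeGroup.ext_hom
      rw [Fin.forall_fin_two]
      constructor
      · simp only [MonoidHom.comp_apply, MonoidHom.id_apply, hF, SemidirectProduct.lift_inl,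
          f₁a, map_mul, map_inv, Gx, Gy]
        -- goal: (B*T)⁻¹ * T = inl (of 0)
        rw [inv_mul_eq_iff_eq_mul]
        have h4 : T * SemidirectProduct.inl (FreeGroup.of 0) =
            SemidirectProduct.inl (ψ (FreeGroup.of 0)) * T := hTconj _
        rw [mul_assoc, h4, ha, hB, ← mul_assoc, ← map_mul, mul_inv_cancel, map_one, one_mul]
      · simp only [MonoidHom.comp_apply, MonoidHom.id_apply, hF, SemidirectProduct.lift_inl,
          f₁b, map_mul, map_inv, Gx, Gy, hB]
        group
    · apply MonoidHom.ext_mint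
      simp only [MonoidHom.comp_apply, MonoidHom.id_apply, hF, SemidirectProduct.lift_inr,
        f₂1, Gx, hT]
  -- F ∘ G = id
  have hFG : F.comp G = MonoidHom.id _ := by
    apply PresentedGroup.ext
    rw [Fin.forall_fin_two]
    constructor
    · show F (G x) = x
      rw [Gx, hT, hF, SemidirectProduct.lift_inr, f₂1]
    · show F (G y) = y
      rw [Gy, map_mul, hB, hT, hF, SemidirectProduct.lift_inl, SemidirectProduct.lift_inr,
        f₁b, f₂1]
      group
  exact ⟨F.toMulEquiv G hGF hFG⟩
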